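/- arXiv:2310.09026 — 2 statements merged into one kernel-verified Lean document; each statement's English description precedes it below -/
import Mathlib

section
/- A linear fractional map φ(z) = (az+b)/(cz+d) with ad−bc ≠ 0 maps the open unit disk 𝔻 into itself if and only if |b·conj(d) − a·conj(c)| + |ad − bc| ≤ |d|² − |c|². -/
open ComplexConjugate

section Aux
open Complex Filter Topology

lemma key1 (c d z : ℂ) : normSq (c*z+d) = normSq (conj c + conj d * z) + (normSq d - normSq c)*(1 - normSq z) := by
  simp only [normSq_apply, add_re, add_im, mul_re, mul_im, conj_re, conj_im]
  ring

lemma nsq (z : ℂ) : Complex.normSq z = ‖z‖^2 := by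
  rw [Complex.normSq_eq_norm_sq]

lemma suff (a b c d : ℂ) (h : a * d - b * c ≠ 0)
    (hR : ‖b * conj d - a * conj c‖ + ‖a * d - b * c‖ ≤ ‖d‖ ^ 2 - ‖c‖ ^ 2) :
    ∀ z : ℂ, ‖z‖ < 1 → c * z + d ≠ 0 ∧ ‖(a * z + b) / (c * z + d)‖ < 1 := by
  intro z hz
  set X := b * conj d - a * conj c with hXdef
  set Y := a * d - b * c with hYdef
  have hv : 0 < ‖Y‖ := norm_pos_iff.mpr h
  have hu : 0 ≤ ‖X‖ := norm_nonneg _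
  have hw : 0 < normSq d - normSq c := by
    rw [nsq d, nsq c] at *
    linarith [norm_nonneg (b * conj d - a * conj c), norm_pos_iff.mpr h]
  have hz2 : normSq z < 1 := by
    rw [nsq]; nlinarith [norm_nonneg z]
  have hnsq : normSq (conj c + conj d * z) + (normSq d - normSq c)*(1 - normSq z) = normSq (c*z+d) :=
    (key1 c d z).symm
  have hDpos : 0 < normSq (c*z+d) := by nlinarith [normSq_nonneg (conj c + conj d * z)]
  have hD : c * z + d ≠ 0 := by
    intro h0; rw [h0, normSq_zero] at hDpos; exact lt_irrefl 0 hDpos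
  refine ⟨hD, ?_⟩
  -- ‖E‖ < ‖D‖
  have hED : ‖conj c + conj d * z‖ < ‖c*z+d‖ := by
    have h1 : ‖conj c + conj d * z‖^2 < ‖c*z+d‖^2 := by
      rw [← nsq, ← nsq]; nlinarith
    exact lt_of_pow_lt_pow_left₀ 2 (norm_nonneg _) h1
  -- main bound
  have hkey : ((normSq d - normSq c : ℝ) : ℂ) * (a*z+b) = X * (c*z+d) + Y * (conj c + conj d * z) := by
    have : (d*conj d - c*conj c)*(a*z+b) - (b*conj d - a*conj c)*(c*z+d) = (a*d-b*c)*(conj c + conj d*z) := by ring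
    rw [Complex.mul_conj, Complex.mul_conj] at this
    push_cast
    rw [hXdef, hYdef]
    linear_combination this
  have hnorm : (normSq d - normSq c) * ‖a*z+b‖ = ‖X * (c*z+d) + Y * (conj c + conj d * z)‖ := by
    rw [← hkey, norm_mul, Complex.norm_real, Real.norm_eq_abs, abs_of_pos hw]
  have hN : (normSq d - normSq c) * ‖a*z+b‖ < (normSq d - normSq c) * ‖c*z+d‖ := by
    rw [hnorm]
    calc ‖X * (c*z+d) + Y * (conj c + conj d * z)‖
        ≤ ‖X‖*‖c*z+d‖ + ‖Y‖*‖conj c + conj d * z‖ := by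
          refine le_trans (norm_add_le _ _) ?_
          rw [norm_mul, norm_mul]
      _ < ‖X‖*‖c*z+d‖ + ‖Y‖*‖c*z+d‖ := by
          have := mul_lt_mul_of_pos_left hED hv
          linarith
      _ ≤ (normSq d - normSq c) * ‖c*z+d‖ := by
          have hDn : 0 < ‖c*z+d‖ := norm_pos_iff.mpr hD
          have : ‖X‖ + ‖Y‖ ≤ normSq d - normSq c := by
            rw [nsq d, nsq c]; exact hR
          nlinarith
  have : ‖a*z+b‖ < ‖c*z+d‖ := lt_of_mul_lt_mul_left hN hw.le
  rw [norm_div, div_lt_one (norm_pos_iff.mpr hD)]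
  exact this

lemma strict_ineq (a b c d : ℂ)
    (hyp : ∀ z : ℂ, ‖z‖ < 1 → c * z + d ≠ 0 ∧ ‖(a * z + b) / (c * z + d)‖ < 1)
    (z : ℂ) (hz : ‖z‖ < 1) : ‖a * z + b‖ < ‖c * z + d‖ := by
  obtain ⟨hD, hlt⟩ := hyp z hz
  rw [norm_div, div_lt_one (norm_pos_iff.mpr hD)] at hlt
  exact hlt

-- Step 2: ‖c‖ < ‖d‖
lemma cd_lt (a b c d : ℂ) (h : a * d - b * c ≠ 0)
    (hyp : ∀ z : ℂ, ‖z‖ < 1 → c * z + d ≠ 0 ∧ ‖(a * z + b) / (c * z + d)‖ < 1) :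
    ‖c‖ < ‖d‖ := by
  have hd : d ≠ 0 := by
    have := (hyp 0 (by norm_num)).1
    simpa using this
  by_contra hcd
  push_neg at hcd   -- ‖d‖ ≤ ‖c‖
  have hdpos : 0 < ‖d‖ := norm_pos_iff.mpr hd
  have hcpos : 0 < ‖c‖ := lt_of_lt_of_le hdpos hcd
  have hc : c ≠ 0 := norm_pos_iff.mp hcpos
  set v := ‖a * d - b * c‖ with hvdef
  have hv : 0 < v := norm_pos_iff.mpr h
  set ε : ℝ := v / (‖a * d‖ + ‖c‖ * ‖d‖ + v) with hεdef
  have hden : 0 < ‖a * d‖ + ‖c‖ * ‖d‖ + v := by positivity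
  have hε0 : 0 < ε := by positivity
  have hε1 : ε < 1 := by
    rw [hεdef, div_lt_one hden]
    nlinarith [norm_nonneg (a*d)]
  set z : ℂ := ((ε : ℂ) - 1) * d / c with hzdef
  have hznorm : ‖z‖ < 1 := by
    rw [hzdef, norm_div, norm_mul]
    rw [div_lt_one hcpos]
    have h1 : ‖(ε:ℂ) - 1‖ = 1 - ε := by
      rw [show ((ε:ℂ) - 1) = ((ε - 1 : ℝ) : ℂ) by push_cast; ring]
      rw [Complex.norm_real, Real.norm_eq_abs, abs_of_neg (by linarith)]
      ring
    rw [h1]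
    nlinarith
  have hlt := strict_ineq a b c d hyp z hznorm
  have hczd : c * z + d = (ε : ℂ) * d := by
    rw [hzdef]; field_simp; ring
  have hazb : a * z + b = ((b*c - a*d) + (ε:ℂ) * (a*d)) / c := by
    rw [hzdef]; field_simp; ring
  rw [hczd, hazb] at hlt
  have h2 : ‖(b*c - a*d) + (ε:ℂ) * (a*d)‖ ≥ v - ε * ‖a*d‖ := by
    have ht := norm_add_le ((b*c - a*d) + (ε:ℂ) * (a*d)) (-((ε:ℂ) * (a*d)))
    have he : (b*c - a*d) + (ε:ℂ) * (a*d) + -((ε:ℂ) * (a*d)) = b*c - a*d := by ring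
    rw [he, norm_neg] at ht
    have h3 : ‖b*c - a*d‖ = v := by rw [hvdef, ← norm_neg]; ring_nf
    have h4 : ‖(ε:ℂ) * (a*d)‖ = ε * ‖a*d‖ := by
      rw [norm_mul, Complex.norm_real, Real.norm_eq_abs, abs_of_pos hε0]
    rw [h3, h4] at ht
    linarith
  rw [norm_div, norm_mul, Complex.norm_real, Real.norm_eq_abs, abs_of_pos hε0] at hlt
  rw [div_lt_iff₀ hcpos] at hlt
  have : v - ε * ‖a*d‖ < ε * ‖d‖ * ‖c‖ := lt_of_le_of_lt h2 hlt
  have hfin : v < ε * (‖a*d‖ + ‖c‖*‖d‖) := by nlinarith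
  rw [hεdef] at hfin
  rw [div_mul_eq_mul_div, lt_div_iff₀ hden] at hfin
  nlinarith

lemma closed_disk (a b c d : ℂ)
    (hstrict : ∀ z : ℂ, ‖z‖ < 1 → ‖a * z + b‖ < ‖c * z + d‖) :
    ∀ z : ℂ, ‖z‖ ≤ 1 → ‖a * z + b‖ ≤ ‖c * z + d‖ := by
  intro z hz
  have hc1 : Continuous fun t : ℝ => ‖a * ((t:ℂ) * z) + b‖ := by fun_prop
  have hc2 : Continuous fun t : ℝ => ‖c * ((t:ℂ) * z) + d‖ := by fun_prop
  have h1 : Tendsto (fun t : ℝ => ‖a * ((t:ℂ) * z) + b‖) (𝓝[<] 1) (𝓝 ‖a * z + b‖) := by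
    have := (hc1.tendsto 1).mono_left (nhdsWithin_le_nhds (s := Set.Iio 1))
    simpa using this
  have h2 : Tendsto (fun t : ℝ => ‖c * ((t:ℂ) * z) + d‖) (𝓝[<] 1) (𝓝 ‖c * z + d‖) := by
    have := (hc2.tendsto 1).mono_left (nhdsWithin_le_nhds (s := Set.Iio 1))
    simpa using this
  refine le_of_tendsto_of_tendsto h1 h2 ?_
  have hmem : Set.Ioo (0:ℝ) 1 ∈ 𝓝[<] (1:ℝ) :=
    Ioo_mem_nhdsLT (by norm_num)
  filter_upwards [hmem] with t ht
  refine (hstrict ((t:ℂ) * z) ?_).le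
  rw [norm_mul, Complex.norm_real, Real.norm_eq_abs, abs_of_pos ht.1]
  calc t * ‖z‖ ≤ t * 1 := by nlinarith [ht.1]
    _ < 1 := by linarith [ht.2]

lemma nec_main (a b c d : ℂ) (h : a * d - b * c ≠ 0)
    (hcd : ‖c‖ < ‖d‖)
    (hclosed : ∀ z : ℂ, ‖z‖ ≤ 1 → ‖a * z + b‖ ≤ ‖c * z + d‖) :
    ‖b * conj d - a * conj c‖ + ‖a * d - b * c‖ ≤ ‖d‖ ^ 2 - ‖c‖ ^ 2 := by
  set X := b * conj d - a * conj c with hXdef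
  set Y := a * d - b * c with hYdef
  have hv : 0 < ‖Y‖ := norm_pos_iff.mpr h
  -- unit direction e with X = ‖X‖ • e
  set e : ℂ := if hX : X = 0 then 1 else X / ‖X‖ with hedef
  have he : ‖e‖ = 1 := by
    rw [hedef]
    split
    · simp
    · rename_i hX
      rw [norm_div, Complex.norm_real, Real.norm_eq_abs, abs_of_pos (norm_pos_iff.mpr hX),
        div_self (norm_pos_iff.mpr hX).ne']
  have heX : X = (‖X‖ : ℂ) * e := by
    rw [hedef]
    split
    · rename_i hX; simp [hX]
    · rename_i hX
      rw [mul_div_assoc']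
      rw [mul_comm, mul_div_assoc, div_self]
      · ring
      · exact_mod_cast (norm_pos_iff.mpr hX).ne'
  -- μ with ‖μ‖ = 1 and Y * μ = ‖Y‖ • e
  set μ : ℂ := conj Y * e / (‖Y‖ : ℂ) with hμdef
  have hμn : ‖μ‖ = 1 := by
    rw [hμdef, norm_div, norm_mul, RCLike.norm_conj, he, Complex.norm_real,
      Real.norm_eq_abs, abs_of_pos hv, mul_one, div_self hv.ne']
  have hYμ : Y * μ = (‖Y‖ : ℂ) * e := by
    rw [hμdef]
    rw [mul_div_assoc']
    rw [show Y * (conj Y * e) = (Y * conj Y) * e by ring, Complex.mul_conj]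
    rw [nsq]
    push_cast
    rw [show (‖Y‖:ℂ)^2 * e = ((‖Y‖:ℂ) * e) * ‖Y‖ by ring]
    rw [mul_div_assoc, div_self (by exact_mod_cast hv.ne')]
    ring
  have hμμ : μ * conj μ = 1 := by
    rw [Complex.mul_conj, nsq, hμn]
    norm_num
  -- denominator
  set den : ℂ := conj d - μ * c with hddef
  have hden : den ≠ 0 := by
    intro h0
    have : ‖conj d‖ = ‖μ * c‖ := by
      have : conj d = μ * c := by rw [hddef] at h0; linear_combination h0
      rw [this]
    rw [RCLike.norm_conj, norm_mul, hμn, one_mul] at this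
    linarith
  set zs : ℂ := (μ * d - conj c) / den with hzsdef
  have hzs1 : ‖zs‖ = 1 := by
    have hnum : ‖μ * d - conj c‖ = ‖den‖ := by
      have hsq : (μ * d - conj c) * conj (μ * d - conj c) = den * conj den := by
        rw [hddef]
        simp only [map_sub, map_mul, Complex.conj_conj]
        linear_combination (d * conj d - c * conj c) * hμμ
      have : Complex.normSq (μ * d - conj c) = Complex.normSq den := by
        have h1 := Complex.mul_conj (μ * d - conj c)
        have h2 := Complex.mul_conj den
        rw [h1, h2] at hsq
        exact_mod_cast hsq
      rw [nsq, nsq] at this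
      nlinarith [norm_nonneg (μ * d - conj c), norm_nonneg den]
    rw [hzsdef, norm_div, hnum, div_self (norm_pos_iff.mpr hden).ne']
  -- c * zs + d
  set W : ℂ := d * conj d - c * conj c with hWdef
  have hWr : W = ((‖d‖^2 - ‖c‖^2 : ℝ) : ℂ) := by
    rw [hWdef, Complex.mul_conj, Complex.mul_conj, nsq, nsq]
    push_cast
    ring
  have hWpos : (0:ℝ) < ‖d‖^2 - ‖c‖^2 := by nlinarith [norm_nonneg c]
  have hczd : c * zs + d = W / den := by
    rw [hzsdef, hWdef]
    field_simp
    rw [hddef]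
    ring
  have hczd_ne : c * zs + d ≠ 0 := by
    rw [hczd]
    apply div_ne_zero _ hden
    rw [hWr]
    exact_mod_cast (by positivity : ((‖d‖^2 - ‖c‖^2 : ℝ)) ≠ 0)
  have hE : conj c + conj d * zs = μ * (c * zs + d) := by
    rw [hczd, hzsdef, hWdef]
    field_simp
    rw [hddef]
    ring
  -- the key identity
  have hkey : W * (a * zs + b) = X * (c * zs + d) + Y * (conj c + conj d * zs) := by
    rw [hXdef, hYdef, hWdef]
    ring
  have hkey2 : W * (a * zs + b) = ((‖X‖ + ‖Y‖ : ℝ) : ℂ) * e * (c * zs + d) := by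
    rw [hkey, hE, show Y * (μ * (c * zs + d)) = (Y * μ) * (c * zs + d) by ring, hYμ]
    nth_rewrite 1 [heX]
    push_cast
    ring
  -- take norms
  have hnorms : (‖d‖^2 - ‖c‖^2) * ‖a * zs + b‖ = (‖X‖ + ‖Y‖) * ‖c * zs + d‖ := by
    have := congrArg norm hkey2
    rw [norm_mul, norm_mul, norm_mul, hWr, he, Complex.norm_real, Complex.norm_real,
      Real.norm_eq_abs, Real.norm_eq_abs, abs_of_pos hWpos,
      abs_of_pos (by positivity : (0:ℝ) < ‖X‖ + ‖Y‖), mul_one] at this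
    exact this
  have hle := hclosed zs (le_of_eq hzs1)
  have hDpos : 0 < ‖c * zs + d‖ := norm_pos_iff.mpr hczd_ne
  nlinarith

end Aux

theorem stmt_12 (a b c d : ℂ) (h : a * d - b * c ≠ 0) :
    (∀ z : ℂ, ‖z‖ < 1 → c * z + d ≠ 0 ∧ ‖(a * z + b) / (c * z + d)‖ < 1)
      ↔ ‖b * conj d - a * conj c‖ + ‖a * d - b * c‖ ≤ ‖d‖ ^ 2 - ‖c‖ ^ 2 := by
  constructor
  · intro hyp
    exact nec_main a b c d h (cd_lt a b c d h hyp)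
      (closed_disk a b c d (strict_ineq a b c d hyp))
  · intro hR
    exact suff a b c d h hR
end

section
/- Let a₀, a₁ ∈ ℂ and φ(z) = a₀ + a₁z/(1 − a₀z). Then φ maps the open unit disk into itself if and only if |a₀| < 1 and 2|a₀ + conj(a₀)·(a₁ − a₀²)| ≤ 1 − |a₁ − a₀²|². -/
open ComplexConjugate

lemma normSq_key (a0 b z : ℂ) :
    Complex.normSq (1 - a0*z) - Complex.normSq (a0 + b*z)
      = (1 - Complex.normSq a0) + (Complex.normSq a0 - Complex.normSq b) * Complex.normSq z
        - 2*((a0 + conj a0 * b)*z).re := by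
  simp [Complex.normSq_apply, Complex.add_re, Complex.add_im, Complex.mul_re, Complex.mul_im,
    Complex.sub_re, Complex.sub_im, Complex.conj_re, Complex.conj_im]
  ring

lemma phi_eq (a0 a1 z : ℂ) (h : 1 - a0*z ≠ 0) :
    a0 + a1*z/(1-a0*z) = (a0 + (a1 - a0^2)*z)/(1-a0*z) := by
  field_simp; ring

lemma denom_ne (a0 z : ℂ) (ha : ‖a0‖ < 1) (hz : ‖z‖ < 1) : 1 - a0*z ≠ 0 := by
  intro h
  have h1 : ‖a0*z‖ < 1 := by
    rw [norm_mul]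
    nlinarith [norm_nonneg a0, norm_nonneg z]
  have : a0*z = 1 := by linear_combination -h
  rw [this] at h1; simp at h1

lemma real_key (X B C r : ℝ) (hX0 : 0 ≤ X) (hB0 : 0 ≤ B) (hC0 : 0 ≤ C) (hr0 : 0 ≤ r)
    (hX : X < 1) (hr : r < 1) (h1 : 2*C ≤ 1 - B^2) (h2 : X - X*B ≤ C) :
    2*C*r < 1 - X^2 + (X^2 - B^2)*r^2 := by
  have hB1 : B ≤ 1 := by nlinarith
  have hP : 0 < (1 - X^2) - (X^2 - B^2)*r := by
    rcases le_or_gt (X^2) (B^2) with h | h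
    · nlinarith
    · have h2X : 2*X ≤ 1 + B := by
        rcases eq_or_lt_of_le hB1 with hB | hB
        · nlinarith
        · nlinarith [mul_le_mul_of_nonneg_left h2 (by norm_num : (0:ℝ) ≤ 2)]
      nlinarith [sq_nonneg (1 - B), sq_nonneg (X - B)]
  nlinarith [mul_pos (by linarith : (0:ℝ) < 1 - r) hP, mul_le_mul_of_nonneg_right h1 hr0]

lemma pointwise_iff (a0 a1 z : ℂ) (hX : ‖a0‖ < 1) (hz : ‖z‖ < 1) :
    ‖a0 + a1 * z / (1 - a0 * z)‖ < 1 ↔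
    2*((a0 + conj a0 * (a1 - a0^2)) * z).re
      < 1 - ‖a0‖^2 + (‖a0‖^2 - ‖a1 - a0^2‖^2) * ‖z‖^2 := by
  have hden := denom_ne a0 z hX hz
  rw [phi_eq a0 a1 z hden, norm_div, div_lt_one (norm_pos_iff.2 hden)]
  have hsq : ‖a0 + (a1-a0^2)*z‖ < ‖1 - a0*z‖ ↔
      Complex.normSq (a0 + (a1-a0^2)*z) < Complex.normSq (1 - a0*z) := by
    rw [← Complex.sq_norm, ← Complex.sq_norm]
    constructor
    · intro h; exact pow_lt_pow_left₀ h (by positivity) two_ne_zero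
    · intro h; exact lt_of_pow_lt_pow_left₀ 2 (by positivity) h
  rw [hsq]
  have key := normSq_key a0 (a1 - a0^2) z
  have e1 : Complex.normSq a0 = ‖a0‖^2 := by
    rw [Complex.normSq_eq_norm_sq]
  have e2 : Complex.normSq (a1 - a0^2) = ‖a1 - a0^2‖^2 := by
    rw [Complex.normSq_eq_norm_sq]
  have e3 : Complex.normSq z = ‖z‖^2 := by
    rw [Complex.normSq_eq_norm_sq]
  rw [e1, e2, e3] at key
  constructor <;> intro h <;> linarith

theorem stmt_13 (a0 a1 : ℂ) :
    (∀ z : ℂ, ‖z‖ < 1 → ‖a0 + a1 * z / (1 - a0 * z)‖ < 1)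
      ↔ (‖a0‖ < 1 ∧ 2 * ‖a0 + conj a0 * (a1 - a0 ^ 2)‖ ≤ 1 - ‖a1 - a0 ^ 2‖ ^ 2) := by
  set b : ℂ := a1 - a0^2 with hb
  set c : ℂ := a0 + conj a0 * b with hc
  have hCb : ‖a0‖ - ‖a0‖ * ‖b‖ ≤ ‖c‖ := by
    have := norm_sub_norm_le a0 (-(conj a0 * b))
    simp only [sub_neg_eq_add, norm_neg, norm_mul, RCLike.norm_conj] at this
    exact this
  constructor
  · intro h
    have hX : ‖a0‖ < 1 := by simpa using h 0 (by simp)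
    refine ⟨hX, ?_⟩
    set u : ℂ := if c = 0 then 1 else (‖c‖ : ℂ)⁻¹ * conj c with hu
    have hu1 : ‖u‖ = 1 := by
      rw [hu]
      split_ifs with h0
      · simp
      · rw [norm_mul, RCLike.norm_conj, norm_inv, Complex.norm_real, Real.norm_eq_abs,
          abs_of_nonneg (norm_nonneg c)]
        exact inv_mul_cancel₀ (norm_ne_zero_iff.2 h0)
    have hcu : c * u = (‖c‖ : ℂ) := by
      rw [hu]
      split_ifs with h0
      · simp [h0]
      · have hne : (‖c‖:ℂ) ≠ 0 := by
          simpa using norm_ne_zero_iff.2 h0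
        calc c * ((‖c‖:ℂ)⁻¹ * conj c) = (‖c‖:ℂ)⁻¹ * (c * conj c) := by ring
          _ = (‖c‖:ℂ)⁻¹ * ((‖c‖^2 : ℝ) : ℂ) := by
              rw [Complex.mul_conj, Complex.normSq_eq_norm_sq]
          _ = (‖c‖ : ℂ) := by
              push_cast
              rw [sq, ← mul_assoc, inv_mul_cancel₀ hne, one_mul]
    have h' : ∀ r : ℝ, 0 ≤ r → r < 1 →
        2*‖c‖*r < 1 - ‖a0‖^2 + (‖a0‖^2 - ‖b‖^2)*r^2 := by
      intro r hr0 hr1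
      have hzn : ‖(r:ℂ) * u‖ < 1 := by
        rw [norm_mul, hu1, mul_one, Complex.norm_real, Real.norm_eq_abs, abs_of_nonneg hr0]
        exact hr1
      have hp := (pointwise_iff a0 a1 ((r:ℂ)*u) hX hzn).1 (h _ hzn)
      have hre : (c * ((r:ℂ)*u)).re = ‖c‖ * r := by
        have : c * ((r:ℂ)*u) = (r:ℂ) * (‖c‖:ℂ) := by rw [mul_comm (r:ℂ) u, ← mul_assoc, hcu]; ring
        rw [this, ← Complex.ofReal_mul, Complex.ofReal_re]; ring
      rw [← hb, ← hc, hre] at hp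
      have hnz : ‖(r:ℂ)*u‖ = r := by
        rw [norm_mul, hu1, mul_one, Complex.norm_real, Real.norm_eq_abs, abs_of_nonneg hr0]
      rw [hnz] at hp
      linarith
    have hcont : Filter.Tendsto (fun r : ℝ => 1 - ‖a0‖^2 + (‖a0‖^2 - ‖b‖^2)*r^2 - 2*‖c‖*r)
        (nhdsWithin 1 (Set.Iio 1))
        (nhds (1 - ‖a0‖^2 + (‖a0‖^2 - ‖b‖^2)*1^2 - 2*‖c‖*1)) := by
      apply Filter.Tendsto.mono_left _ nhdsWithin_le_nhds
      exact Continuous.tendsto (by continuity) 1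
    have hev : ∀ᶠ r in nhdsWithin (1:ℝ) (Set.Iio 1),
        0 ≤ 1 - ‖a0‖^2 + (‖a0‖^2 - ‖b‖^2)*r^2 - 2*‖c‖*r := by
      filter_upwards [Ioo_mem_nhdsLT (by norm_num : (0:ℝ) < 1)] with r hr
      have := h' r hr.1.le hr.2
      linarith
    have hge := ge_of_tendsto hcont hev
    have : 0 ≤ 1 - ‖a0‖^2 + (‖a0‖^2 - ‖b‖^2)*1^2 - 2*‖c‖*1 := hge
    nlinarith
  · rintro ⟨hX, hbound⟩ z hz
    rw [pointwise_iff a0 a1 z hX hz, ← hb, ← hc]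
    have h1 : (c * z).re ≤ ‖c‖ * ‖z‖ := by
      calc (c * z).re ≤ |(c * z).re| := le_abs_self _
        _ ≤ ‖c * z‖ := Complex.abs_re_le_norm _
        _ = ‖c‖ * ‖z‖ := norm_mul _ _
    have h2 := real_key ‖a0‖ ‖b‖ ‖c‖ ‖z‖ (norm_nonneg _) (norm_nonneg _) (norm_nonneg _)
      (norm_nonneg _) hX hz (by linarith) (by linarith)
    linarith
end
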